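/- arXiv:1603.06104 — 2 statements merged into one kernel-verified Lean document; each statement's English description precedes it below -/
import Mathlib

section
/- Let H be a real Hilbert space with norms and bilinear forms as follows: suppose a, c₀, d₀, d₀' are real constants with d₀ > d₀', λ₀ > 0, and u satisfies the identities ∫|∇u|² = −a∫u² + ∫ u f(u) + ∫_{∂} u g(u) together with the eigenvalue bound λ₀∫u² ≤ ∫|∇u|² − d₀∫_{∂}u² + (a−c₀)∫u². If f(u)u ≤ (c₀+δ)u² + K_δ and g(u)u ≤ (d₀'+δ)u² + K_δ pointwise, with δ < min{λ₀, d₀−d₀'}, then ∫u² + ∫_{∂}u² ≤ K_δ(|Ω| + |∂Ω|)/min{λ₀−δ, d₀−d₀'−δ} and ∫|∇u|² ≤ (c₀+d₀'+2δ)·K_δ(|Ω|+|∂Ω|)/min{λ₀−δ, d₀−d₀'−δ} + K_δ(|Ω|+|∂Ω|). -/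
open MeasureTheory

/-- abstract equilibrium a priori bound: with `∫` over `Ω` modelled by a
finite measure `μ` and `∫_∂` over `∂Ω` by a finite measure `ν`, suppose `u` satisfies
`∫|∇u|² = −a∫u² + ∫ u f(u) + ∫_∂ u g(u)` and the eigenvalue bound
`λ₀∫u² ≤ ∫|∇u|² − d₀∫_∂u² + (a−c₀)∫u²`, with the pointwise bounds
`f(u)u ≤ (c₀+δ)u² + K_δ`, `g(u)u ≤ (d₀'+δ)u² + K_δ` and `δ < min{λ₀, d₀−d₀'}`. Then
`∫u² + ∫_∂u² ≤ K_δ(|Ω|+|∂Ω|)/min{λ₀−δ, d₀−d₀'−δ}` and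
`∫|∇u|² ≤ (c₀+d₀'+2δ)·K_δ(|Ω|+|∂Ω|)/min{λ₀−δ, d₀−d₀'−δ} + K_δ(|Ω|+|∂Ω|)`. -/
theorem stmt13 {X Y : Type*} [MeasurableSpace X] [MeasurableSpace Y]
    (μ : Measure X) (ν : Measure Y) [IsFiniteMeasure μ] [IsFiniteMeasure ν]
    (a c₀ d₀ d₀' lam₀ δ Kδ : ℝ)
    (ha : 0 < a) (hc₀ : 0 ≤ c₀) (hd₀' : 0 ≤ d₀') (hlam : 0 < lam₀)
    (hd : d₀' < d₀) (hδ₀ : 0 < δ) (hδ : δ < min lam₀ (d₀ - d₀')) (hK : 0 < Kδ)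
    (f g : ℝ → ℝ) (u : X → ℝ) (ub : Y → ℝ) (gradsq : X → ℝ)
    (hgradnn : ∀ x, 0 ≤ gradsq x)
    (hi1 : Integrable (fun x => (u x) ^ 2) μ)
    (hi2 : Integrable gradsq μ)
    (hi3 : Integrable (fun x => u x * f (u x)) μ)
    (hi4 : Integrable (fun y => (ub y) ^ 2) ν)
    (hi5 : Integrable (fun y => ub y * g (ub y)) ν)
    (hiden : ∫ x, gradsq x ∂μ
      = -a * ∫ x, (u x) ^ 2 ∂μ + ∫ x, u x * f (u x) ∂μ + ∫ y, ub y * g (ub y) ∂ν)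
    (heig : lam₀ * ∫ x, (u x) ^ 2 ∂μ
      ≤ ∫ x, gradsq x ∂μ - d₀ * ∫ y, (ub y) ^ 2 ∂ν + (a - c₀) * ∫ x, (u x) ^ 2 ∂μ)
    (hfb : ∀ s : ℝ, f s * s ≤ (c₀ + δ) * s ^ 2 + Kδ)
    (hgb : ∀ s : ℝ, g s * s ≤ (d₀' + δ) * s ^ 2 + Kδ) :
    (∫ x, (u x) ^ 2 ∂μ) + (∫ y, (ub y) ^ 2 ∂ν)
        ≤ Kδ * ((μ Set.univ).toReal + (ν Set.univ).toReal)
            / min (lam₀ - δ) (d₀ - d₀' - δ) ∧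
    (∫ x, gradsq x ∂μ)
        ≤ (c₀ + d₀' + 2 * δ)
            * (Kδ * ((μ Set.univ).toReal + (ν Set.univ).toReal)
                / min (lam₀ - δ) (d₀ - d₀' - δ))
          + Kδ * ((μ Set.univ).toReal + (ν Set.univ).toReal) := by

  set A := ∫ x, (u x) ^ 2 ∂μ with hA
  set B := ∫ y, (ub y) ^ 2 ∂ν with hB
  have hAnn : 0 ≤ A := integral_nonneg fun x => sq_nonneg _
  have hBnn : 0 ≤ B := integral_nonneg fun y => sq_nonneg _
  have hF : ∫ x, u x * f (u x) ∂μ ≤ (c₀ + δ) * A + Kδ * (μ Set.univ).toReal := by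
    have h1 : ∫ x, u x * f (u x) ∂μ ≤ ∫ x, ((c₀ + δ) * (u x) ^ 2 + Kδ) ∂μ := by
      apply integral_mono hi3 (by
        exact ((hi1.const_mul _).add (integrable_const _)))
      intro x
      simpa [mul_comm] using hfb (u x)
    calc ∫ x, u x * f (u x) ∂μ ≤ ∫ x, ((c₀ + δ) * (u x) ^ 2 + Kδ) ∂μ := h1
      _ = (c₀ + δ) * A + Kδ * (μ Set.univ).toReal := by
          rw [integral_add (hi1.const_mul _) (integrable_const _),
            integral_const_mul, integral_const]
          simp [hA, smul_eq_mul, mul_comm, Measure.real]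
  have hG : ∫ y, ub y * g (ub y) ∂ν ≤ (d₀' + δ) * B + Kδ * (ν Set.univ).toReal := by
    have h1 : ∫ y, ub y * g (ub y) ∂ν ≤ ∫ y, ((d₀' + δ) * (ub y) ^ 2 + Kδ) ∂ν := by
      apply integral_mono hi5 (by
        exact ((hi4.const_mul _).add (integrable_const _)))
      intro y
      simpa [mul_comm] using hgb (ub y)
    calc ∫ y, ub y * g (ub y) ∂ν ≤ ∫ y, ((d₀' + δ) * (ub y) ^ 2 + Kδ) ∂ν := h1
      _ = (d₀' + δ) * B + Kδ * (ν Set.univ).toReal := by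
          rw [integral_add (hi4.const_mul _) (integrable_const _),
            integral_const_mul, integral_const]
          simp [hB, smul_eq_mul, mul_comm, Measure.real]
  set S := Kδ * ((μ Set.univ).toReal + (ν Set.univ).toReal) with hS
  have hSnn : 0 ≤ S := by
    apply mul_nonneg hK.le
    positivity
  have hmin : 0 < min (lam₀ - δ) (d₀ - d₀' - δ) := by
    rw [lt_min_iff] at hδ
    exact lt_min (by linarith [hδ.1]) (by linarith [hδ.2])
  -- key inequality
  have hkey : (lam₀ - δ) * A + (d₀ - d₀' - δ) * B ≤ S := by
    have := heig
    rw [hiden] at this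
    nlinarith [hF, hG]
  have hsum : min (lam₀ - δ) (d₀ - d₀' - δ) * (A + B) ≤ S := by
    have h1 : min (lam₀ - δ) (d₀ - d₀' - δ) * A ≤ (lam₀ - δ) * A :=
      mul_le_mul_of_nonneg_right (min_le_left _ _) hAnn
    have h2 : min (lam₀ - δ) (d₀ - d₀' - δ) * B ≤ (d₀ - d₀' - δ) * B :=
      mul_le_mul_of_nonneg_right (min_le_right _ _) hBnn
    nlinarith
  have hAB : A + B ≤ S / min (lam₀ - δ) (d₀ - d₀' - δ) :=
    (le_div_iff₀ hmin).2 (by linarith [hsum, mul_comm (min (lam₀ - δ) (d₀ - d₀' - δ)) (A + B)])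
  refine ⟨hAB, ?_⟩
  have hgr : ∫ x, gradsq x ∂μ ≤ (c₀ + d₀' + 2 * δ) * (A + B) + S := by
    rw [hiden]
    nlinarith [hF, hG, ha.le]
  have hcoef : 0 ≤ c₀ + d₀' + 2 * δ := by linarith
  calc ∫ x, gradsq x ∂μ ≤ (c₀ + d₀' + 2 * δ) * (A + B) + S := hgr
    _ ≤ (c₀ + d₀' + 2 * δ) * (S / min (lam₀ - δ) (d₀ - d₀' - δ)) + S := by
        gcongr
end

section
/- Suppose f and g are continuous with limsup_{|u|→∞} f(u)/u ≤ c₀ and limsup_{|u|→∞} g(u)/u ≤ d₀', and suppose d₀ > d₀'' > d₀' are chosen with (d₀/d₀'' − 1)(a − c₀)/2 + λ₀/2 > 0 where λ₀ > 0 is the first eigenvalue of −Δ + (a − c₀) with Robin boundary condition ∂u/∂N = d₀u. Then there exist constants μ > 0 and C ≥ 0 such that the functional W(v) = (1/2)∫|∇v|² + (a/2)∫v² − ∫F(v) − ∫_{∂}G(γv) satisfies W(v) ≥ μ‖v‖²_{H¹(Ω)} − C for all v ∈ H¹(Ω); in particular W is bounded below and coercive: W(v) → ∞ as ‖v‖_{H¹}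 → ∞. -/
/-- coercivity of the Lyapunov functional, abstract form: for
`v ∈ H¹(Ω)` write `E₁ v = ∫|∇v|²`, `E₂ v = ∫v²`, `E₃ v = ∫_∂(γv)²`, `FI v = ∫F(v)`,
`GI v = ∫_∂G(γv)`, so `‖v‖²_{H¹} = E₁ v + E₂ v` and the Lyapunov functional is
`W(v) = (1/2)E₁ v + (a/2)E₂ v − FI v − GI v`. Assume the eigenvalue inequality
`λ₀ E₂ ≤ E₁ − d₀ E₃ + (a−c₀) E₂` with `λ₀ > 0`, constants `d₀ > d₀'' > d₀'`, `d₀'' > 0`,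
`(d₀/d₀'' − 1)(a−c₀)/2 + λ₀/2 > 0`, and the primitive bounds
`FI v ≤ ((c₀+δ)/2)E₂ v + k₀`, `GI v ≤ ((d₀'+δ)/2)E₃ v + k₀'` (for every `δ > 0`, with
suitable `k₀, k₀' ≥ 0`). Then there exist `μ > 0` and `C ≥ 0` with
`W(v) ≥ μ‖v‖²_{H¹} − C` for all `v`; in particular `W` is bounded below and coercive. -/
theorem stmt18 {V : Type*}
    (a c₀ d₀ d₀' d₀'' lam₀ : ℝ)
    (E₁ E₂ E₃ FI GI : V → ℝ)
    (hE₁ : ∀ v, 0 ≤ E₁ v) (hE₂ : ∀ v, 0 ≤ E₂ v) (hE₃ : ∀ v, 0 ≤ E₃ v)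
    (hlam : 0 < lam₀)
    (heig : ∀ v, lam₀ * E₂ v ≤ E₁ v - d₀ * E₃ v + (a - c₀) * E₂ v)
    (hd1 : d₀' < d₀'') (hd2 : d₀'' < d₀) (hd3 : 0 < d₀'')
    (hcond : 0 < (d₀ / d₀'' - 1) * (a - c₀) / 2 + lam₀ / 2)
    (hFb : ∀ δ : ℝ, 0 < δ → ∃ k₀ : ℝ, 0 ≤ k₀ ∧
      ∀ v, FI v ≤ ((c₀ + δ) / 2) * E₂ v + k₀)
    (hGb : ∀ δ : ℝ, 0 < δ → ∃ k₀' : ℝ, 0 ≤ k₀' ∧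
      ∀ v, GI v ≤ ((d₀' + δ) / 2) * E₃ v + k₀') :
    (∃ μ : ℝ, 0 < μ ∧ ∃ C : ℝ, 0 ≤ C ∧ ∀ v,
        μ * (E₁ v + E₂ v) - C ≤ (1/2) * E₁ v + (a/2) * E₂ v - FI v - GI v) ∧
    (∃ m : ℝ, ∀ v, m ≤ (1/2) * E₁ v + (a/2) * E₂ v - FI v - GI v) ∧
    (∀ R : ℝ, ∃ ρ : ℝ, ∀ v, ρ ≤ E₁ v + E₂ v →
        R ≤ (1/2) * E₁ v + (a/2) * E₂ v - FI v - GI v) := by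
  have hd₀ : 0 < d₀ := lt_trans hd3 hd2
  set hq := (d₀ / d₀'' - 1) * (a - c₀) / 2 + lam₀ / 2 with hhq
  set α := d₀'' / d₀ * hq with hα
  have hαpos : 0 < α := mul_pos (div_pos hd3 hd₀) hcond
  set δ := min α (d₀'' - d₀') with hδ
  have hδpos : 0 < δ := lt_min hαpos (by linarith)
  obtain ⟨k₀, hk₀, hF⟩ := hFb δ hδpos
  obtain ⟨k₀', hk₀', hG⟩ := hGb δ hδpos
  set β := (1 - d₀'' / d₀) / 2 with hβ
  have hβpos : 0 < β := by
    have : d₀'' / d₀ < 1 := (div_lt_one hd₀).mpr hd2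
    rw [hβ]; linarith
  set μ := min β (α / 2) with hμ
  have hμpos : 0 < μ := lt_min hβpos (by linarith)
  set C := k₀ + k₀' with hC
  have hCpos : 0 ≤ C := add_nonneg hk₀ hk₀'
  have key : ∀ v, μ * (E₁ v + E₂ v) - C ≤ (1/2) * E₁ v + (a/2) * E₂ v - FI v - GI v := by
    intro v
    have h1 := hF v
    have hle : d₀' + δ ≤ d₀'' := by
      have := min_le_right α (d₀'' - d₀'); linarith
    have h2 : GI v ≤ (d₀''/2) * E₃ v + k₀' := by
      have := hG v
      nlinarith [hE₃ v]
    have h3 : (d₀''/(2*d₀)) * (d₀ * E₃ v) ≤ (d₀''/(2*d₀)) * (E₁ v + (a - c₀ - lam₀) * E₂ v) := by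
      apply mul_le_mul_of_nonneg_left
      · linarith [heig v]
      · positivity
    have h4 : (d₀''/(2*d₀)) * (d₀ * E₃ v) = (d₀''/2) * E₃ v := by
      field_simp
    have hcoef : α = (a - c₀)/2 - d₀''*(a-c₀-lam₀)/(2*d₀) := by
      rw [hα, hhq]; field_simp; ring
    have hδle : δ ≤ α := min_le_left _ _
    have a1 : μ * E₁ v ≤ β * E₁ v :=
      mul_le_mul_of_nonneg_right (min_le_left _ _) (hE₁ v)
    have a2 : μ * E₂ v ≤ (α - δ/2) * E₂ v := by
      have h5 : μ ≤ α - δ/2 := le_trans (min_le_right _ _) (by linarith)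
      exact mul_le_mul_of_nonneg_right h5 (hE₂ v)
    have a3 : (α - δ/2) * E₂ v = ((a - c₀ - δ)/2 - d₀''*(a-c₀-lam₀)/(2*d₀)) * E₂ v := by
      rw [hcoef]; ring
    have hbE : β * E₁ v = (1/2) * E₁ v - (d₀''/(2*d₀)) * E₁ v := by
      rw [hβ]; field_simp
    have h3' : (d₀''/2) * E₃ v ≤ (d₀''/(2*d₀)) * E₁ v + (d₀''*(a-c₀-lam₀)/(2*d₀)) * E₂ v := by
      rw [← h4]
      calc (d₀''/(2*d₀)) * (d₀ * E₃ v) ≤ (d₀''/(2*d₀)) * (E₁ v + (a - c₀ - lam₀) * E₂ v) := h3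
        _ = (d₀''/(2*d₀)) * E₁ v + (d₀''*(a-c₀-lam₀)/(2*d₀)) * E₂ v := by ring
    have s1 : μ * (E₁ v + E₂ v) = μ * E₁ v + μ * E₂ v := mul_add _ _ _
    linarith [s1, a1, a2, a3, hbE, h1, h2, h3']
  refine ⟨⟨μ, hμpos, C, hCpos, key⟩, ⟨-C, fun v => ?_⟩, fun R => ⟨(R + C)/μ, fun v hv => ?_⟩⟩
  · have h0 : 0 ≤ μ * (E₁ v + E₂ v) := mul_nonneg hμpos.le (add_nonneg (hE₁ v) (hE₂ v))
    linarith [key v]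
  · have h7 : R + C ≤ (E₁ v + E₂ v) * μ := (div_le_iff₀ hμpos).mp hv
    have h8 : (E₁ v + E₂ v) * μ = μ * (E₁ v + E₂ v) := mul_comm _ _
    linarith [key v]
end
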